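/- Let σ > 0 and let p ≥ 2. Let Z_1, …, Z_p be i.i.d. N(0, σ²) random variables, and let V₁ and V₂ denote the largest and second largest values among |Z_1|, …, |Z_p|. Then the statistic R = (1 − Φ(V₁/σ))/(1 − Φ(V₂/σ)) is exactly uniformly distributed on [0,1]; that is, for every t ∈ [0,1], ℙ(R ≤ t) = t. -/

import Mathlib

open MeasureTheory ProbabilityTheory Filter

/-- The standard normal cumulative distribution function `Φ`. -/
noncomputable def stdNormalCDF (x : ℝ) : ℝ :=
  ((gaussianReal 0 1) (Set.Iic x)).toReal

/-- The largest of the values `|x 0|, …, |x (p-1)|`. -/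
noncomputable def V1 (p : ℕ) (x : Fin p → ℝ) : ℝ :=
  ⨆ i : Fin p, |x i|

/-- The second largest of the values `|x 0|, …, |x (p-1)|` (counted with multiplicity),
realized as the maximum over distinct pairs of the minimum of the pair. -/
noncomputable def V2 (p : ℕ) (x : Fin p → ℝ) : ℝ :=
  ⨆ i : Fin p, ⨆ j : Fin p, ⨆ _ : i ≠ j, min |x i| |x j|

open Set
open scoped ENNReal NNReal

lemma gauss_Iic_ne_top (x : ℝ) : (gaussianReal 0 1) (Set.Iic x) ≠ ∞ := measure_ne_top _ _

lemma stdNormalCDF_eq_integral (x : ℝ) :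
    stdNormalCDF x = ∫ y in Set.Iic x, gaussianPDFReal 0 1 y := by
  rw [stdNormalCDF, gaussianReal_apply_eq_integral _ one_ne_zero, ENNReal.toReal_ofReal]
  exact setIntegral_nonneg measurableSet_Iic fun y _ => gaussianPDFReal_nonneg 0 1 y

lemma continuous_stdNormalCDF : Continuous stdNormalCDF := by
  have hint : Integrable (gaussianPDFReal 0 1) := integrable_gaussianPDFReal 0 1
  have h : ∀ x, stdNormalCDF x = stdNormalCDF 0 + ∫ y in (0:ℝ)..x, gaussianPDFReal 0 1 y := by
    intro x
    rw [stdNormalCDF_eq_integral, stdNormalCDF_eq_integral,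
      ← intervalIntegral.integral_Iic_sub_Iic hint.integrableOn hint.integrableOn]
    ring
  have : Continuous fun x => stdNormalCDF 0 + ∫ y in (0:ℝ)..x, gaussianPDFReal 0 1 y :=
    continuous_const.add (hint.continuous_primitive 0)
  exact (funext h : stdNormalCDF = _) ▸ this

lemma strictMono_stdNormalCDF : StrictMono stdNormalCDF := by
  intro a b hab
  rw [stdNormalCDF_eq_integral, stdNormalCDF_eq_integral]
  have hint : Integrable (gaussianPDFReal 0 1) := integrable_gaussianPDFReal 0 1
  have h := intervalIntegral.integral_Iic_sub_Iic (f := gaussianPDFReal 0 1) (μ := volume)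
    (a := a) (b := b) hint.integrableOn hint.integrableOn
  have hpos : 0 < ∫ y in a..b, gaussianPDFReal 0 1 y := by
    refine intervalIntegral.intervalIntegral_pos_of_pos_on hint.intervalIntegrable
      (fun y _ => gaussianPDFReal_pos 0 1 y one_ne_zero) hab
  linarith
lemma monotone_stdNormalCDF : Monotone stdNormalCDF := strictMono_stdNormalCDF.monotone

lemma stdNormalCDF_nonneg (x : ℝ) : 0 ≤ stdNormalCDF x := ENNReal.toReal_nonneg

lemma stdNormalCDF_lt_one (x : ℝ) : stdNormalCDF x < 1 := by
  have h1 : (gaussianReal 0 1) (Set.Ioi x) ≠ 0 := by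
    intro h
    have := gaussianReal_absolutelyContinuous' 0 one_ne_zero h
    simp [Real.volume_Ioi] at this
  have h2 : (gaussianReal 0 1) (Set.Iic x) < (gaussianReal 0 1) Set.univ := by
    rw [show (Set.univ : Set ℝ) = Set.Iic x ∪ Set.Ioi x by simp, measure_union (by simp [Set.disjoint_left]) measurableSet_Ioi]
    have := measure_ne_top (gaussianReal 0 1) (Set.Iic x)
    exact ENNReal.lt_add_right this h1
  have : stdNormalCDF x < ((gaussianReal 0 1) Set.univ).toReal :=
    ENNReal.toReal_strict_mono (measure_ne_top _ _) h2
  simpa using this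

lemma gauss_map_neg : (gaussianReal 0 1).map (fun x => -x) = gaussianReal 0 1 := by
  have h := @ProbabilityTheory.gaussianReal_map_const_mul 0 1 (-1)
  have h2 : (⟨(-1:ℝ)^2, sq_nonneg _⟩ : ℝ≥0) * 1 = 1 := by
    ext; norm_num
  simpa [h2] using h

lemma gauss_singleton (x : ℝ) : (gaussianReal 0 1) {x} = 0 :=
  gaussianReal_absolutelyContinuous 0 one_ne_zero (by simp)

lemma stdNormalCDF_neg (x : ℝ) : stdNormalCDF (-x) = 1 - stdNormalCDF x := by
  have hmap : (gaussianReal 0 1) (Set.Iic (-x)) = (gaussianReal 0 1) (Set.Ici x) := by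
    conv_lhs => rw [← gauss_map_neg]
    rw [Measure.map_apply measurable_neg measurableSet_Iic]
    congr 1
    ext y; simp [neg_le]
  have hIci : (gaussianReal 0 1) (Set.Ici x) = 1 - (gaussianReal 0 1) (Set.Iic x) := by
    have : (gaussianReal 0 1) (Set.Ici x) = (gaussianReal 0 1) (Set.Ioi x) := by
      rw [← Set.Ioi_union_left,
        measure_union (Set.disjoint_singleton_right.mpr (by simp)) (by simp),
        gauss_singleton, add_zero]
    rw [this, ← Set.compl_Iic, measure_compl measurableSet_Iic (measure_ne_top _ _), measure_univ]
  rw [stdNormalCDF, hmap, hIci, ENNReal.toReal_sub_of_le (by exact prob_le_one) (by simp)]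
  simp [stdNormalCDF]

lemma stdNormalCDF_zero : stdNormalCDF 0 = 1/2 := by
  have := stdNormalCDF_neg 0
  rw [neg_zero] at this
  linarith

lemma exists_stdNormalCDF_eq {u : ℝ} (h0 : 0 < u) (h2 : u < 1/2) :
    ∃ x : ℝ, 0 < x ∧ stdNormalCDF x = 1 - u := by
  have htop : Tendsto stdNormalCDF atTop (nhds 1) := by
    have h1 : Tendsto (fun x => (gaussianReal 0 1) (Set.Iic x)) atTop
        (nhds ((gaussianReal 0 1) Set.univ)) := tendsto_measure_Iic_atTop _
    have := (ENNReal.tendsto_toReal (by simp)).comp h1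
    simpa [Function.comp_def, show stdNormalCDF = fun x => ((gaussianReal 0 1) (Set.Iic x)).toReal from rfl] using this
  have hev : ∀ᶠ x in atTop, 1 - u < stdNormalCDF x :=
    htop.eventually (eventually_gt_nhds (by linarith))
  obtain ⟨M, hM⟩ := hev.exists
  have h0M : (0:ℝ) ≤ M := by
    by_contra h
    push_neg at h
    have := monotone_stdNormalCDF (le_of_lt h)
    rw [stdNormalCDF_zero] at this
    linarith
  have := intermediate_value_Icc h0M continuous_stdNormalCDF.continuousOn
  have hmem : (1 - u) ∈ Set.Icc (stdNormalCDF 0) (stdNormalCDF M) := by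
    rw [stdNormalCDF_zero]
    exact ⟨by linarith, le_of_lt hM⟩
  obtain ⟨x, hx, hxx⟩ := this hmem
  refine ⟨x, ?_, hxx⟩
  rcases lt_or_eq_of_le hx.1 with h | h
  · exact h
  · exfalso
    rw [← h, stdNormalCDF_zero] at hxx
    linarith


noncomputable def nuU : Measure ℝ := (2 : ℝ≥0∞) • (volume.restrict (Set.Ioo (0:ℝ) (1/2)))

lemma nuU_univ : nuU Set.univ = 1 := by
  simp only [nuU, Measure.smul_apply, Measure.restrict_apply MeasurableSet.univ,
    Set.univ_inter, Real.volume_Ioo, smul_eq_mul]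
  rw [show ((2:ℝ≥0∞)) = ENNReal.ofReal (2:ℝ) by simp, ← ENNReal.ofReal_mul (by norm_num)]
  norm_num

instance : IsProbabilityMeasure nuU := ⟨nuU_univ⟩

lemma nuU_Iic_nonpos {u : ℝ} (hu : u ≤ 0) : nuU (Set.Iic u) = 0 := by
  simp only [nuU, Measure.smul_apply, Measure.restrict_apply measurableSet_Iic, smul_eq_mul]
  have : Set.Iic u ∩ Set.Ioo (0:ℝ) (1/2) = ∅ := by
    ext x; simp only [Set.mem_inter_iff, Set.mem_Iic, Set.mem_Ioo, Set.mem_empty_iff_false,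
      iff_false, not_and]
    intro hx h0; linarith
  rw [this]; simp

lemma nuU_Iic_ge {u : ℝ} (hu : 1/2 ≤ u) : nuU (Set.Iic u) = 1 := by
  simp only [nuU, Measure.smul_apply, Measure.restrict_apply measurableSet_Iic, smul_eq_mul]
  have : Set.Iic u ∩ Set.Ioo (0:ℝ) (1/2) = Set.Ioo (0:ℝ) (1/2) := by
    apply Set.inter_eq_self_of_subset_right
    intro x hx; exact le_trans (le_of_lt hx.2) hu
  rw [this, Real.volume_Ioo,
    show ((2:ℝ≥0∞)) = ENNReal.ofReal (2:ℝ) by simp, ← ENNReal.ofReal_mul (by norm_num)]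
  norm_num

lemma nuU_Iic_mid {u : ℝ} (h0 : 0 < u) (h2 : u < 1/2) :
    nuU (Set.Iic u) = ENNReal.ofReal (2 * u) := by
  simp only [nuU, Measure.smul_apply, Measure.restrict_apply measurableSet_Iic, smul_eq_mul]
  have : Set.Iic u ∩ Set.Ioo (0:ℝ) (1/2) = Set.Ioc (0:ℝ) u := by
    ext x; simp only [Set.mem_inter_iff, Set.mem_Iic, Set.mem_Ioo, Set.mem_Ioc]
    constructor
    · rintro ⟨h1, h2', h3⟩; exact ⟨h2', h1⟩
    · rintro ⟨h1, h2'⟩; exact ⟨h2', h1, by linarith⟩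
  rw [this, Real.volume_Ioc,
    show ((2:ℝ≥0∞)) = ENNReal.ofReal (2:ℝ) by simp, ← ENNReal.ofReal_mul (by norm_num)]
  norm_num

noncomputable def gfun (σ : ℝ) (z : ℝ) : ℝ := 1 - stdNormalCDF (|z| / σ)

lemma measurable_gfun (σ : ℝ) : Measurable (gfun σ) :=
  measurable_const.sub
    (continuous_stdNormalCDF.measurable.comp (measurable_abs.div_const σ))

lemma gfun_pos (σ z : ℝ) : 0 < gfun σ z := by
  have := stdNormalCDF_lt_one (|z| / σ); simp [gfun]; linarith

lemma gfun_antitone {σ : ℝ} (hσ : 0 < σ) {a b : ℝ} (hab : |a| ≤ |b|) :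
    gfun σ b ≤ gfun σ a := by
  have : stdNormalCDF (|a| / σ) ≤ stdNormalCDF (|b| / σ) :=
    monotone_stdNormalCDF ((div_le_div_iff_of_pos_right hσ).mpr hab)
  simp only [gfun]; linarith

lemma gauss_Iic_ofReal (y : ℝ) :
    (gaussianReal 0 1) (Set.Iic y) = ENNReal.ofReal (stdNormalCDF y) := by
  rw [stdNormalCDF, ENNReal.ofReal_toReal (measure_ne_top _ _)]

lemma gauss_Ici (y : ℝ) :
    (gaussianReal 0 1) (Set.Ici y) = (gaussianReal 0 1) (Set.Iic (-y)) := by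
  conv_lhs => rw [← gauss_map_neg]
  rw [Measure.map_apply measurable_neg measurableSet_Ici]
  congr 1
  ext w; simp [le_neg]

lemma map_scale {σ : ℝ} (hσ : 0 < σ) :
    (gaussianReal 0 ⟨σ^2, sq_nonneg σ⟩).map (fun z => σ⁻¹ * z) = gaussianReal 0 1 := by
  have h := @ProbabilityTheory.gaussianReal_map_const_mul 0 ⟨σ^2, sq_nonneg σ⟩ σ⁻¹
  have h2 : (⟨(σ⁻¹)^2, sq_nonneg _⟩ : ℝ≥0) * ⟨σ^2, sq_nonneg σ⟩ = 1 := by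
    ext
    push_cast
    field_simp
  erw [h2] at h
  simp at h; exact h

lemma map_gfun {σ : ℝ} (hσ : 0 < σ) :
    (gaussianReal 0 ⟨σ^2, sq_nonneg σ⟩).map (gfun σ) = nuU := by
  haveI : IsProbabilityMeasure ((gaussianReal 0 ⟨σ^2, sq_nonneg σ⟩).map (gfun σ)) :=
    by haveI : IsProbabilityMeasure (gaussianReal 0 ⟨σ^2, sq_nonneg σ⟩) := instIsProbabilityMeasureGaussianReal _ _; exact Measure.isProbabilityMeasure_map (measurable_gfun σ).aemeasurable
  refine Measure.ext_of_Iic _ _ (fun u => ?_)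
  rw [Measure.map_apply (measurable_gfun σ) measurableSet_Iic]
  have hSmeas : MeasurableSet {w : ℝ | 1 - u ≤ stdNormalCDF |w|} := by
    apply measurableSet_le measurable_const
    exact continuous_stdNormalCDF.measurable.comp measurable_abs
  have hpre : gfun σ ⁻¹' Set.Iic u = (fun z => σ⁻¹ * z) ⁻¹' {w | 1 - u ≤ stdNormalCDF |w|} := by
    ext z
    simp only [Set.mem_preimage, Set.mem_Iic, Set.mem_setOf_eq, gfun]
    rw [abs_mul, abs_of_pos (inv_pos.mpr hσ), inv_mul_eq_div]
    constructor <;> intro h <;> linarith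
  rw [hpre, ← Measure.map_apply (measurable_const_mul σ⁻¹) hSmeas, map_scale hσ]
  rcases le_or_gt u 0 with hu | hu
  · have : {w : ℝ | 1 - u ≤ stdNormalCDF |w|} = ∅ := by
      ext w
      simp only [Set.mem_setOf_eq, Set.mem_empty_iff_false, iff_false, not_le]
      have := stdNormalCDF_lt_one |w|
      linarith
    rw [this, measure_empty, nuU_Iic_nonpos hu]
  rcases le_or_gt (1/2 : ℝ) u with hu2 | hu2
  · have : {w : ℝ | 1 - u ≤ stdNormalCDF |w|} = Set.univ := by
      ext w
      simp only [Set.mem_setOf_eq, Set.mem_univ, iff_true]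
      have h1 : stdNormalCDF 0 ≤ stdNormalCDF |w| := monotone_stdNormalCDF (abs_nonneg w)
      rw [stdNormalCDF_zero] at h1
      linarith
    rw [this, measure_univ, nuU_Iic_ge hu2]
  · obtain ⟨x, hx0, hxeq⟩ := exists_stdNormalCDF_eq hu hu2
    have hset : {w : ℝ | 1 - u ≤ stdNormalCDF |w|} = Set.Iic (-x) ∪ Set.Ici x := by
      ext w
      simp only [Set.mem_setOf_eq, Set.mem_union, Set.mem_Iic, Set.mem_Ici]
      rw [← hxeq, strictMono_stdNormalCDF.le_iff_le, le_abs, or_comm, le_neg]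
    have hdisj : Disjoint (Set.Iic (-x)) (Set.Ici x) := by
      rw [Set.disjoint_left]
      intro w hw hw'
      simp only [Set.mem_Iic] at hw
      simp only [Set.mem_Ici] at hw'
      linarith
    rw [hset, measure_union hdisj measurableSet_Ici, ← gauss_Ici, gauss_Ici x,
      gauss_Iic_ofReal, stdNormalCDF_neg, hxeq, nuU_Iic_mid hu hu2,
      ← ENNReal.ofReal_add (by linarith) (by linarith)]
    ring_nf


lemma nuU_Ici {s : ℝ} (hs : 0 < s) : nuU (Set.Ici s) = ENNReal.ofReal (1 - 2*s) := by
  simp only [nuU, Measure.smul_apply, Measure.restrict_apply measurableSet_Ici, smul_eq_mul]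
  rcases lt_or_ge s (1/2) with h | h
  · have : Set.Ici s ∩ Set.Ioo (0:ℝ) (1/2) = Set.Ico s (1/2) := by
      ext x
      simp only [Set.mem_inter_iff, Set.mem_Ici, Set.mem_Ioo, Set.mem_Ico]
      constructor
      · rintro ⟨h1, _, h3⟩; exact ⟨h1, h3⟩
      · rintro ⟨h1, h2⟩; exact ⟨h1, by linarith, h2⟩
    rw [this, Real.volume_Ico,
      show ((2:ℝ≥0∞)) = ENNReal.ofReal (2:ℝ) by simp, ← ENNReal.ofReal_mul (by norm_num)]
    norm_num
    rw [← ENNReal.ofReal_ofNat 2, ← ENNReal.ofReal_mul (by linarith)]; congr 1; ring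
  · have : Set.Ici s ∩ Set.Ioo (0:ℝ) (1/2) = ∅ := by
      ext x
      simp only [Set.mem_inter_iff, Set.mem_Ici, Set.mem_Ioo, Set.mem_empty_iff_false,
        iff_false, not_and]
      intro h1 h2; intro; linarith
    rw [this, measure_empty, mul_zero, Eq.comm, ENNReal.ofReal_eq_zero]
    linarith

lemma ofReal_max (r : ℝ) : ENNReal.ofReal r = ENNReal.ofReal (max r 0) := by
  rcases le_total r 0 with h | h
  · rw [ENNReal.ofReal_of_nonpos h, max_eq_right h]; simp
  · rw [max_eq_left h]

lemma key_lintegral {t : ℝ} (h0 : 0 < t) (h1 : t ≤ 1) {n : ℕ} (hn : 1 ≤ n) :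
    ∫⁻ a, (nuU {r : ℝ | a ≤ t * r})^n ∂nuU = ENNReal.ofReal (t / (n+1)) := by
  have ht' : (t:ℝ) ≠ 0 := ne_of_gt h0
  set f : ℝ → ℝ := fun a => (max (1 - 2*a/t) 0)^n with hf
  have hfcont : Continuous f := by fun_prop
  have hset : ∀ a : ℝ, {r : ℝ | a ≤ t * r} = Set.Ici (a/t) := by
    intro a; ext r
    simp only [Set.mem_setOf_eq, Set.mem_Ici]
    rw [div_le_iff₀ h0, mul_comm]
  have hval : ∀ a ∈ Set.Ioo (0:ℝ) (1/2), (nuU {r : ℝ | a ≤ t * r})^n = ENNReal.ofReal (f a) := by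
    intro a ha
    rw [hset a, nuU_Ici (div_pos ha.1 h0), ofReal_max, hf]
    rw [ENNReal.ofReal_pow (le_max_right _ _)]
    congr 2
    rw [mul_div_assoc]
  rw [show ∫⁻ a, (nuU {r : ℝ | a ≤ t * r})^n ∂nuU
      = 2 * ∫⁻ a in Set.Ioo (0:ℝ) (1/2), (nuU {r : ℝ | a ≤ t * r})^n from
    lintegral_smul_measure _ _]
  have : ∫⁻ a in Set.Ioo (0:ℝ) (1/2), (nuU {r : ℝ | a ≤ t * r})^n
      = ∫⁻ a in Set.Ioo (0:ℝ) (1/2), ENNReal.ofReal (f a) := by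
    refine setLIntegral_congr_fun measurableSet_Ioo ?_
    intro a ha
    exact hval a ha
  rw [this]
  have hint : IntegrableOn f (Set.Ioo (0:ℝ) (1/2)) :=
    (hfcont.integrableOn_Icc).mono_set Set.Ioo_subset_Icc_self
  rw [← ofReal_integral_eq_lintegral_ofReal hint
    (Filter.Eventually.of_forall fun a => by positivity)]
  have hreal : ∫ a in Set.Ioo (0:ℝ) (1/2), f a = t / (2*(n+1)) := by
    rw [← integral_Ioc_eq_integral_Ioo, ← intervalIntegral.integral_of_le (by norm_num)]
    have hsplit : (∫ a in (0:ℝ)..(t/2), f a) + ∫ a in (t/2)..(1/2), f a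
        = ∫ a in (0:ℝ)..(1/2), f a := by
      exact intervalIntegral.integral_add_adjacent_intervals
        (hfcont.intervalIntegrable (μ := volume) _ _) (hfcont.intervalIntegrable (μ := volume) _ _)
    have hzero : ∫ a in (t/2)..(1/2), f a = 0 := by
      rw [intervalIntegral.integral_congr (g := fun _ => (0:ℝ)) ?_, intervalIntegral.integral_const]
      · simp
      · intro a ha
        rw [Set.uIcc_of_le (by linarith)] at ha
        have h2 : t ≤ 2*a := by have := ha.1; linarith
        have : 1 - 2*a/t ≤ 0 := by
          rw [sub_nonpos, le_div_iff₀ h0]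
          linarith
        simp only [hf]
        rw [max_eq_right this, zero_pow (by omega)]
    have hfirst : ∫ a in (0:ℝ)..(t/2), f a = t / (2*(n+1)) := by
      have hEq : Set.EqOn f (fun a => (1 - 2*a/t)^n) (Set.uIcc 0 (t/2)) := by
        intro a ha
        rw [Set.uIcc_of_le (by linarith)] at ha
        have : 0 ≤ 1 - 2*a/t := by
          rw [sub_nonneg, div_le_one h0]
          have := ha.2; linarith
        simp only [hf]
        rw [max_eq_left this]
      rw [intervalIntegral.integral_congr hEq]
      have hderiv : ∀ a ∈ Set.uIcc (0:ℝ) (t/2),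
          HasDerivAt (fun a : ℝ => -(t/(2*(n+1)))*(1 - 2*a/t)^(n+1)) ((1 - 2*a/t)^n) a := by
        intro a _
        have hu : HasDerivAt (fun a : ℝ => 1 - 2*a/t) (-(2/t)) a := by
          have : HasDerivAt (fun a : ℝ => 2*a/t) (2/t) a := by
            simpa [mul_comm, mul_div_assoc] using
              ((hasDerivAt_id a).const_mul (2/t)).congr_deriv (by ring)
          simpa using (this.const_sub 1)
        have hpow := (hu.pow (n+1)).const_mul (-(t/(2*(n+1))))
        refine hpow.congr_deriv ?_
        have hn1 : ((n:ℝ)+1) ≠ 0 := by positivity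
        push_cast
        field_simp
      have hintg : IntervalIntegrable (fun x : ℝ => (1 - 2*x/t)^n) volume 0 (t/2) :=
        Continuous.intervalIntegrable (by fun_prop) _ _
      rw [intervalIntegral.integral_eq_sub_of_hasDerivAt hderiv hintg]
      have : (1 - 2*(t/2)/t) = 0 := by field_simp; ring
      rw [this]
      simp [zero_pow (Nat.succ_ne_zero n)]
    linarith [hsplit, hzero, hfirst]
  rw [hreal, show ((2:ℝ≥0∞)) = ENNReal.ofReal (2:ℝ) by simp,
    ← ENNReal.ofReal_mul (by norm_num)]
  congr 1
  field_simp

lemma V1_eq {p : ℕ} (x : Fin p → ℝ) {i₀ : Fin p} (h₀ : ∀ i, |x i| ≤ |x i₀|) :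
    V1 p x = |x i₀| := by
  show (⨆ i, |x i|) = |x i₀|
  haveI : Nonempty (Fin p) := ⟨i₀⟩
  exact le_antisymm (ciSup_le h₀)
    (le_ciSup (f := fun i => |x i|) (Set.Finite.bddAbove (Set.finite_range _)) i₀)

lemma V2_eq {p : ℕ} (x : Fin p → ℝ) {i₀ i₁ : Fin p} (hne : i₁ ≠ i₀)
    (h₀ : ∀ i, |x i| ≤ |x i₀|) (h₁ : ∀ j, j ≠ i₀ → |x j| ≤ |x i₁|) :
    V2 p x = |x i₁| := by
  show (⨆ i, ⨆ j, ⨆ _ : i ≠ j, min |x i| |x j|) = |x i₁|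
  haveI : Nonempty (Fin p) := ⟨i₀⟩
  refine le_antisymm ?_ ?_
  · refine ciSup_le fun i => ciSup_le fun j => ?_
    rcases eq_or_ne i j with rfl | hij
    · haveI : IsEmpty (i ≠ i) := ⟨fun h => h rfl⟩
      rw [Real.iSup_of_isEmpty]
      exact abs_nonneg _
    · rw [ciSup_pos hij]
      rcases eq_or_ne i i₀ with rfl | hi
      · exact (min_le_right _ _).trans (h₁ j (Ne.symm hij))
      · exact (min_le_left _ _).trans (h₁ i hi)
  · have b1 : BddAbove (Set.range fun j => ⨆ _ : i₀ ≠ j, min |x i₀| |x j|) :=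
      Set.Finite.bddAbove (Set.finite_range _)
    have b2 : BddAbove (Set.range fun i => ⨆ j, ⨆ _ : i ≠ j, min |x i| |x j|) :=
      Set.Finite.bddAbove (Set.finite_range _)
    calc |x i₁| = ⨆ _ : i₀ ≠ i₁, min |x i₀| |x i₁| := by
          rw [ciSup_pos (Ne.symm hne), min_eq_right (h₀ i₁)]
      _ ≤ ⨆ j, ⨆ _ : i₀ ≠ j, min |x i₀| |x j| :=
          le_ciSup (f := fun j => ⨆ _ : i₀ ≠ j, min |x i₀| |x j|) b1 i₁
      _ ≤ ⨆ i, ⨆ j, ⨆ _ : i ≠ j, min |x i| |x j| :=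
          le_ciSup (f := fun i => ⨆ j, ⨆ _ : i ≠ j, min |x i| |x j|) b2 i₀

lemma exists_ne_fin {p : ℕ} (hp : 2 ≤ p) (i : Fin p) : ∃ j : Fin p, j ≠ i := by
  rcases eq_or_ne i ⟨0, by omega⟩ with rfl | h
  · exact ⟨⟨1, by omega⟩, by simp [Fin.ext_iff]⟩
  · exact ⟨⟨0, by omega⟩, Ne.symm h⟩

lemma ratio_le_iff {σ : ℝ} (hσ : 0 < σ) {p : ℕ} (hp : 2 ≤ p) (x : Fin p → ℝ) {t : ℝ}
    (ht0 : 0 ≤ t) (ht1 : t ≤ 1) :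
    (1 - stdNormalCDF (V1 p x / σ)) / (1 - stdNormalCDF (V2 p x / σ)) ≤ t
      ↔ ∃ i, ∀ j, j ≠ i → gfun σ (x i) ≤ t * gfun σ (x j) := by
  haveI : Nonempty (Fin p) := ⟨⟨0, by omega⟩⟩
  obtain ⟨i₀, h₀⟩ := Finite.exists_max fun i => |x i|
  obtain ⟨j₀, hj₀⟩ := exists_ne_fin hp i₀
  haveI : Nonempty {j : Fin p // j ≠ i₀} := ⟨⟨j₀, hj₀⟩⟩
  obtain ⟨j₁, hj₁⟩ := Finite.exists_max fun j : {j : Fin p // j ≠ i₀} => |x j.1|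
  set i₁ := j₁.1 with hi₁
  have hne : i₁ ≠ i₀ := j₁.2
  have h₁ : ∀ j, j ≠ i₀ → |x j| ≤ |x i₁| := fun j hj => hj₁ ⟨j, hj⟩
  set y : Fin p → ℝ := fun i => gfun σ (x i) with hy
  have hnum : 1 - stdNormalCDF (V1 p x / σ) = y i₀ := by rw [V1_eq x h₀]; rfl
  have hden : 1 - stdNormalCDF (V2 p x / σ) = y i₁ := by rw [V2_eq x hne h₀ h₁]; rfl
  have ypos : ∀ i, 0 < y i := fun i => gfun_pos σ (x i)
  have ymin : ∀ i, y i₀ ≤ y i := fun i => gfun_antitone hσ (h₀ i)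
  have ymin2 : ∀ j, j ≠ i₀ → y i₁ ≤ y j := fun j hj => gfun_antitone hσ (h₁ j hj)
  rw [hnum, hden, div_le_iff₀ (ypos i₁)]
  constructor
  · intro h
    refine ⟨i₀, fun j hj => ?_⟩
    calc y i₀ ≤ t * y i₁ := by linarith
      _ ≤ t * y j := mul_le_mul_of_nonneg_left (ymin2 j hj) ht0
  · rintro ⟨i, hi⟩
    rcases eq_or_ne i i₀ with rfl | hii
    · have := hi i₁ hne
      linarith [this]
    · have h1 : y i ≤ t * y i₀ := hi i₀ (Ne.symm hii)
      have h2 : y i₀ ≤ y i := ymin i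
      have ht1' : 1 ≤ t := by nlinarith [ypos i₀]
      have htEq : t = 1 := le_antisymm ht1 ht1'
      subst htEq
      rcases eq_or_ne i₁ i with rfl | h4
      · linarith
      · have := hi i₁ (h4)
        linarith


lemma pi_measure_S {n : ℕ} (hn : 1 ≤ n) {t : ℝ} (h0 : 0 < t) (h1 : t ≤ 1) (i : Fin (n+1)) :
    Measure.pi (fun _ : Fin (n+1) => nuU) {v : Fin (n+1) → ℝ | ∀ j, j ≠ i → v i ≤ t * v j}
      = ENNReal.ofReal (t / (n+1)) := by
  have hmp := measurePreserving_piFinSuccAbove (fun _ : Fin (n+1) => nuU) i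
  set T : Set (ℝ × (Fin n → ℝ)) := {q | ∀ j, q.1 ≤ t * q.2 j} with hT
  have hTmeas : MeasurableSet T := by
    have : T = ⋂ j, {q : ℝ × (Fin n → ℝ) | q.1 ≤ t * q.2 j} := by
      ext q; simp [hT, Set.mem_iInter]
    rw [this]
    exact MeasurableSet.iInter fun j =>
      measurableSet_le measurable_fst (by fun_prop)
  have hpre : {v : Fin (n+1) → ℝ | ∀ j, j ≠ i → v i ≤ t * v j}
      = (MeasurableEquiv.piFinSuccAbove (fun _ => ℝ) i) ⁻¹' T := by
    ext v
    have happ : (MeasurableEquiv.piFinSuccAbove (fun _ : Fin (n+1) => ℝ) i) v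
        = (v i, fun j => v (i.succAbove j)) := rfl
    simp only [Set.mem_setOf_eq, Set.mem_preimage, happ, hT]
    constructor
    · intro h j
      exact h _ (Fin.succAbove_ne i j)
    · intro h j hj
      obtain ⟨k, hk⟩ := Fin.exists_succAbove_eq hj
      rw [← hk]
      exact h k
  rw [hpre, hmp.measure_preimage hTmeas.nullMeasurableSet, Measure.prod_apply hTmeas]
  have hinner : ∀ a : ℝ, (Measure.pi fun _ : Fin n => nuU) (Prod.mk a ⁻¹' T)
      = (nuU {r : ℝ | a ≤ t * r})^n := by
    intro a
    have : Prod.mk a ⁻¹' T = Set.pi Set.univ (fun _ : Fin n => {r : ℝ | a ≤ t * r}) := by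
      ext b
      simp [hT, Set.mem_univ_pi]
    rw [this, Measure.pi_pi]
    simp [Finset.prod_const, Finset.card_univ]
  simp_rw [hinner]
  exact key_lintegral h0 h1 hn


/-- The spacing test statistic `(1 − Φ(V₁/σ))/(1 − Φ(V₂/σ))` of i.i.d. `N(0, σ²)` variables
is exactly `Unif(0,1)` distributed. -/
theorem stmt0 {Ω : Type*} [MeasurableSpace Ω] (μ : Measure Ω) [IsProbabilityMeasure μ]
    (σ : ℝ) (hσ : 0 < σ) (p : ℕ) (hp : 2 ≤ p)
    (Z : Fin p → Ω → ℝ) (hmeas : ∀ i, Measurable (Z i))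
    (hindep : iIndepFun Z μ)
    (hdist : ∀ i, μ.map (Z i) = gaussianReal 0 ⟨σ ^ 2, sq_nonneg σ⟩)
    (t : ℝ) (ht : t ∈ Set.Icc (0 : ℝ) 1) :
    μ {ω | (1 - stdNormalCDF (V1 p (fun i => Z i ω) / σ)) /
            (1 - stdNormalCDF (V2 p (fun i => Z i ω) / σ)) ≤ t}
      = ENNReal.ofReal t := by
  obtain ⟨n, rfl⟩ : ∃ n, p = n + 1 := ⟨p - 1, by omega⟩
  have hn : 1 ≤ n := by omega
  set Y : Fin (n+1) → Ω → ℝ := fun i ω => gfun σ (Z i ω) with hY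
  have hYmeas : ∀ i, Measurable (Y i) := fun i => (measurable_gfun σ).comp (hmeas i)
  have hev : {ω | (1 - stdNormalCDF (V1 (n+1) (fun i => Z i ω) / σ)) /
            (1 - stdNormalCDF (V2 (n+1) (fun i => Z i ω) / σ)) ≤ t}
      = ⋃ i, {ω | ∀ j, j ≠ i → Y i ω ≤ t * Y j ω} := by
    ext ω
    rw [Set.mem_setOf_eq, ratio_le_iff hσ hp (fun i => Z i ω) ht.1 ht.2]
    simp only [Set.mem_iUnion, Set.mem_setOf_eq, hY]
  rw [hev]
  rcases eq_or_lt_of_le ht.2 with h1 | h1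
  · -- t = 1
    subst h1
    have huniv : (⋃ i, {ω | ∀ j, j ≠ i → Y i ω ≤ 1 * Y j ω}) = Set.univ := by
      ext ω
      simp only [Set.mem_iUnion, Set.mem_setOf_eq, Set.mem_univ, iff_true]
      obtain ⟨i₀, h₀⟩ := Finite.exists_max fun i => |Z i ω|
      refine ⟨i₀, fun j _ => ?_⟩
      rw [one_mul]
      exact gfun_antitone hσ (h₀ j)
    rw [huniv, measure_univ]
    simp
  rcases eq_or_lt_of_le ht.1 with h0 | h0
  · -- t = 0
    have : (⋃ i, {ω | ∀ j, j ≠ i → Y i ω ≤ t * Y j ω}) = ∅ := by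
      ext ω
      simp only [Set.mem_iUnion, Set.mem_setOf_eq, Set.mem_empty_iff_false, iff_false, not_exists]
      intro i hi
      obtain ⟨j, hj⟩ := exists_ne_fin hp i
      have h2 := hi j hj
      have hpos : 0 < Y i ω := gfun_pos σ (Z i ω)
      rw [← h0] at h2
      simp only [zero_mul] at h2
      linarith
    rw [this, measure_empty, ← h0]
    simp
  · -- 0 < t < 1
    have hAmeas : ∀ i : Fin (n+1), MeasurableSet {ω | ∀ j, j ≠ i → Y i ω ≤ t * Y j ω} := by
      intro i
      have : {ω | ∀ j, j ≠ i → Y i ω ≤ t * Y j ω}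
          = ⋂ j, ⋂ (_ : j ≠ i), {ω | Y i ω ≤ t * Y j ω} := by
        ext ω; simp [Set.mem_iInter]
      rw [this]
      exact MeasurableSet.iInter fun j => MeasurableSet.iInter fun _ =>
        measurableSet_le (hYmeas i) ((hYmeas j).const_mul t)
    have hdisj : Pairwise (Function.onFun Disjoint
        fun i => {ω | ∀ j, j ≠ i → Y i ω ≤ t * Y j ω}) := by
      intro i k hik
      rw [Function.onFun, Set.disjoint_left]
      intro ω hωi hωk
      simp only [Set.mem_setOf_eq] at hωi hωk
      have h1' := hωi k (Ne.symm hik)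
      have h2' := hωk i hik
      have hpos : 0 < Y i ω := gfun_pos σ (Z i ω)
      have hc : Y i ω ≤ t * (t * Y i ω) :=
        h1'.trans (mul_le_mul_of_nonneg_left h2' h0.le)
      have ht2 : t * t < 1 := by nlinarith
      nlinarith [hc, hpos, ht2]
    rw [measure_iUnion hdisj hAmeas]
    -- joint law
    have hYindep : iIndepFun Y μ :=
      hindep.comp (fun _ => gfun σ) (fun _ => measurable_gfun σ)
    have hFmeas : Measurable (fun ω => fun i => Y i ω) :=
      measurable_pi_lambda _ hYmeas
    have hmap : μ.map (fun ω => fun i => Y i ω) = Measure.pi (fun _ : Fin (n+1) => nuU) := by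
      refine (Measure.pi_eq fun s hs => ?_).symm
      rw [Measure.map_apply hFmeas (MeasurableSet.univ_pi hs)]
      have : (fun ω => fun i => Y i ω) ⁻¹' Set.pi Set.univ s = ⋂ i, Y i ⁻¹' s i := by
        ext ω; simp [Set.mem_univ_pi]
      rw [this]
      have h2 := hYindep.measure_inter_preimage_eq_mul Finset.univ (sets := s)
        (fun i _ => hs i)
      have hbi : (⋂ i ∈ Finset.univ, Y i ⁻¹' s i) = ⋂ i, Y i ⁻¹' s i := by simp
      rw [hbi] at h2
      rw [h2]
      congr 1
      ext i
      rw [← Measure.map_apply (hYmeas i) (hs i)]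
      have : μ.map (Y i) = nuU := by
        rw [show Y i = (gfun σ) ∘ (Z i) from rfl,
          ← Measure.map_map (measurable_gfun σ) (hmeas i), hdist i, map_gfun hσ]
      rw [this]
    have hSmeas : ∀ i : Fin (n+1),
        MeasurableSet {v : Fin (n+1) → ℝ | ∀ j, j ≠ i → v i ≤ t * v j} := by
      intro i
      have : {v : Fin (n+1) → ℝ | ∀ j, j ≠ i → v i ≤ t * v j}
          = ⋂ j, ⋂ (_ : j ≠ i), {v : Fin (n+1) → ℝ | v i ≤ t * v j} := by
        ext v; simp [Set.mem_iInter]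
      rw [this]
      exact MeasurableSet.iInter fun j => MeasurableSet.iInter fun _ =>
        measurableSet_le (measurable_pi_apply i) (by fun_prop)
    have hAi : ∀ i : Fin (n+1), μ {ω | ∀ j, j ≠ i → Y i ω ≤ t * Y j ω}
        = ENNReal.ofReal (t / (n+1)) := by
      intro i
      have hpre : {ω | ∀ j, j ≠ i → Y i ω ≤ t * Y j ω}
          = (fun ω => fun i => Y i ω) ⁻¹' {v : Fin (n+1) → ℝ | ∀ j, j ≠ i → v i ≤ t * v j} := by
        ext ω; simp
      rw [hpre, ← Measure.map_apply hFmeas (hSmeas i), hmap, pi_measure_S hn h0 ht.2 i]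
    rw [tsum_fintype]
    simp_rw [hAi]
    rw [Finset.sum_const, Finset.card_univ, Fintype.card_fin, nsmul_eq_mul]
    rw [show ((n+1 : ℕ) : ℝ≥0∞) = ENNReal.ofReal ((n+1 : ℕ) : ℝ) by
      rw [ENNReal.ofReal_natCast], ← ENNReal.ofReal_mul (by positivity)]
    congr 1
    push_cast
    field_simp
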